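/- For any 0 ≤ Q ≤ 1, the function f(x) = 1 + φ(√(Q + (1-Q)(1-x²))) - φ(√(1-x²)) is concave in x on [0,1]. -/

import Mathlib

noncomputable def phi (x : ℝ) : ℝ :=
  1 - (1/2) * (1 + x) * Real.logb 2 (1 + x) - (1/2) * (1 - x) * Real.logb 2 (1 - x)

open Real Set

noncomputable def myat (t : ℝ) : ℝ := (Real.log (1+t) - Real.log (1-t))/2

lemma hasDerivAt_myat {t : ℝ} (h0 : -1 < t) (h1 : t < 1) :
    HasDerivAt myat (1/(1-t^2)) t := by
  have hp : (0:ℝ) < 1 + t := by linarith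
  have hm : (0:ℝ) < 1 - t := by linarith
  have d1 : HasDerivAt (fun y : ℝ => Real.log (1+y)) (1/(1+t)) t := by
    simpa using (((hasDerivAt_id t).const_add 1).log hp.ne')
  have d2 : HasDerivAt (fun y : ℝ => Real.log (1-y)) (-1/(1-t)) t := by
    simpa using (((hasDerivAt_id t).const_sub 1).log hm.ne')
  have := (d1.sub d2).div_const 2
  have h2 : (1:ℝ) - t^2 ≠ 0 := by nlinarith
  refine this.congr_deriv ?_
  field_simp
  ring

lemma continuous_myat_at {t : ℝ} (h0 : -1 < t) (h1 : t < 1) : ContinuousAt myat t :=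
  (hasDerivAt_myat h0 h1).differentiableAt.continuousAt

lemma myat_zero : myat 0 = 0 := by simp [myat]

-- L0 : t ≤ myat t on [0,1)
lemma le_myat {t : ℝ} (h0 : 0 ≤ t) (h1 : t < 1) : t ≤ myat t := by
  have mono : MonotoneOn (fun t => myat t - t) (Ico (0:ℝ) 1) := by
    apply monotoneOn_of_hasDerivWithinAt_nonneg (f' := fun t => 1/(1-t^2) - 1)
      (convex_Ico 0 1)
    · intro x hx
      exact ((continuous_myat_at (by linarith [hx.1]) hx.2).sub continuous_id.continuousAt).continuousWithinAt
    · intro x hx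
      rw [interior_Ico] at hx
      exact (((hasDerivAt_myat (by linarith [hx.1]) hx.2).sub (hasDerivAt_id x)).hasDerivWithinAt)
    · intro x hx
      rw [interior_Ico] at hx
      have h2 : (0:ℝ) < 1 - x^2 := by nlinarith [hx.1, hx.2]
      have : (1:ℝ) ≤ 1/(1-x^2) := by
        rw [le_div_iff₀ h2]; nlinarith [hx.1, hx.2]
      linarith
  have := mono (show (0:ℝ) ∈ Ico (0:ℝ) 1 by constructor <;> norm_num) ⟨h0, h1⟩ h0
  simpa [myat_zero] using this

-- L1' : myat t ≤ t/(1-t^2) on [0,1)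
lemma myat_le {t : ℝ} (h0 : 0 ≤ t) (h1 : t < 1) : myat t ≤ t/(1-t^2) := by
  have mono : MonotoneOn (fun t => t/(1-t^2) - myat t) (Ico (0:ℝ) 1) := by
    apply monotoneOn_of_hasDerivWithinAt_nonneg
      (f' := fun t => 2*t^2/(1-t^2)^2) (convex_Ico 0 1)
    · intro x hx
      have h2 : (1:ℝ) - x^2 ≠ 0 := by nlinarith [hx.1, hx.2]
      have c1 : ContinuousAt (fun t : ℝ => t/(1-t^2)) x :=
        continuousAt_id.div (by fun_prop) h2
      have c2 : ContinuousAt myat x := continuous_myat_at (by linarith [hx.1]) hx.2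
      exact (c1.sub c2).continuousWithinAt
    · intro x hx
      rw [interior_Ico] at hx
      have h2 : (0:ℝ) < 1 - x^2 := by nlinarith [hx.1, hx.2]
      have d1 : HasDerivAt (fun t : ℝ => t/(1-t^2)) ((1*(1-x^2) - x*(-(2*x)))/(1-x^2)^2) x := by
        exact (hasDerivAt_id x).div (by simpa using ((hasDerivAt_pow 2 x).const_sub 1)) h2.ne'
      have := d1.sub (hasDerivAt_myat (by linarith [hx.1]) hx.2)
      refine (this.congr_deriv ?_).hasDerivWithinAt
      field_simp
      ring
    · intro x hx
      positivity
  have := mono (show (0:ℝ) ∈ Ico (0:ℝ) 1 by constructor <;> norm_num) ⟨h0, h1⟩ h0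
  simp only [myat_zero] at this
  norm_num at this
  linarith

-- L2 : t^3 ≤ (3-t^2)*(myat t - t) on [0,1)
lemma L2 {t : ℝ} (h0 : 0 ≤ t) (h1 : t < 1) : t^3 ≤ (3-t^2)*(myat t - t) := by
  have mono : MonotoneOn (fun t => (3-t^2)*(myat t - t) - t^3) (Ico (0:ℝ) 1) := by
    apply monotoneOn_of_hasDerivWithinAt_nonneg
      (f' := fun t => 2*t*(t/(1-t^2) - myat t)) (convex_Ico 0 1)
    · intro x hx
      have c2 : ContinuousAt myat x := continuous_myat_at (by linarith [hx.1]) hx.2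
      exact (((by fun_prop : ContinuousAt (fun t:ℝ => 3-t^2) x).mul
        (c2.sub continuousAt_id)).sub (by fun_prop)).continuousWithinAt
    · intro x hx
      rw [interior_Ico] at hx
      have h2 : (0:ℝ) < 1 - x^2 := by nlinarith [hx.1, hx.2]
      have d1 : HasDerivAt (fun t : ℝ => 3 - t^2) (-(2*x)) x := by
        simpa using ((hasDerivAt_pow 2 x).const_sub 3)
      have d2 : HasDerivAt (fun t : ℝ => myat t - t) (1/(1-x^2) - 1) x :=
        (hasDerivAt_myat (by linarith [hx.1]) hx.2).sub (hasDerivAt_id x)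
      have d3 : HasDerivAt (fun t : ℝ => t^3) (3*x^2) x := by
        simpa using hasDerivAt_pow 3 x
      refine (((d1.mul d2).sub d3).congr_deriv ?_).hasDerivWithinAt
      field_simp
      ring
    · intro x hx
      rw [interior_Ico] at hx
      have := myat_le hx.1.le hx.2
      have : 0 ≤ x/(1-x^2) - myat x := by linarith
      have hx0 : 0 ≤ 2*x := by linarith [hx.1]
      positivity
  have := mono (show (0:ℝ) ∈ Ico (0:ℝ) 1 by constructor <;> norm_num) ⟨h0, h1⟩ h0
  simp only [myat_zero] at this
  norm_num at this
  linarith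

-- L3 : C antitone
lemma L3 {s r : ℝ} (hs : 0 < s) (hsr : s ≤ r) (hr : r < 1) :
    (1-r^2)*(myat r - r)/r^3 ≤ (1-s^2)*(myat s - s)/s^3 := by
  have anti : AntitoneOn (fun t => (1-t^2)*(myat t - t)/t^3) (Ioo (0:ℝ) 1) := by
    apply antitoneOn_of_hasDerivWithinAt_nonpos
      (f' := fun t => (t^3 - (3-t^2)*(myat t - t))/t^4) (convex_Ioo 0 1)
    · intro x hx
      obtain ⟨hx1, hx2⟩ := hx
      have c2 : ContinuousAt myat x := continuous_myat_at (by linarith) hx2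
      have hx3 : (x:ℝ)^3 ≠ 0 := by positivity
      have c1 : ContinuousAt (fun t:ℝ => 1-t^2) x := by fun_prop
      have c3 : ContinuousAt (fun t:ℝ => t^3) x := by fun_prop
      exact (((c1.mul (c2.sub continuousAt_id)).div c3 hx3).continuousWithinAt)
    · intro x hx
      rw [interior_Ioo] at hx
      obtain ⟨hx1, hx2⟩ := hx
      have hx0 : x ≠ 0 := ne_of_gt hx1
      have hx3 : (x:ℝ)^3 ≠ 0 := by positivity
      have h2 : (1:ℝ) - x^2 ≠ 0 := by nlinarith
      have d1 : HasDerivAt (fun t : ℝ => 1 - t^2) (-(2*x)) x := by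
        simpa using ((hasDerivAt_pow 2 x).const_sub 1)
      have d2 : HasDerivAt (fun t : ℝ => myat t - t) (1/(1-x^2) - 1) x :=
        (hasDerivAt_myat (by linarith) hx2).sub (hasDerivAt_id x)
      have d3 : HasDerivAt (fun t : ℝ => t^3) (3*x^2) x := by
        simpa using hasDerivAt_pow 3 x
      refine (((d1.mul d2).div d3 hx3).congr_deriv ?_).hasDerivWithinAt
      simp only [Pi.mul_apply]
      field_simp
      ring
    · intro x hx
      rw [interior_Ioo] at hx
      have h := L2 hx.1.le hx.2
      have hx4 : (0:ℝ) < x^4 := pow_pos hx.1 4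
      apply div_nonpos_of_nonpos_of_nonneg (by linarith) hx4.le
  exact anti ⟨hs, lt_of_le_of_lt hsr hr⟩ ⟨lt_of_lt_of_le hs hsr, hr⟩ hsr

lemma phi_eq : phi = fun y => 1 - ((1+y)*Real.log (1+y) + (1-y)*Real.log (1-y))/(2*Real.log 2) := by
  funext y
  unfold phi Real.logb
  have : Real.log 2 ≠ 0 := ne_of_gt (Real.log_pos (by norm_num))
  field_simp
  ring

lemma continuous_phi : Continuous phi := by
  rw [phi_eq]
  have c1 : Continuous (fun y : ℝ => (1+y)*Real.log (1+y)) :=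
    Real.continuous_mul_log.comp (continuous_const.add continuous_id)
  have c2 : Continuous (fun y : ℝ => (1-y)*Real.log (1-y)) :=
    Real.continuous_mul_log.comp (continuous_const.sub continuous_id)
  continuity

lemma phi_one : phi 1 = 0 := by
  have : Real.logb 2 (1+1) = 1 := by
    norm_num [Real.logb_self_eq_one]
  simp [phi, this]
  norm_num

lemma hasDerivAt_phi {y : ℝ} (h0 : -1 < y) (h1 : y < 1) :
    HasDerivAt phi (-(myat y)/Real.log 2) y := by
  have hp : (0:ℝ) < 1 + y := by linarith
  have hm : (0:ℝ) < 1 - y := by linarith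
  have hL : Real.log 2 ≠ 0 := ne_of_gt (Real.log_pos (by norm_num))
  have p1 : HasDerivAt (fun y : ℝ => 1 + y) 1 y := (hasDerivAt_id y).const_add 1
  have p2 : HasDerivAt (fun y : ℝ => 1 - y) (-1) y := by
    simpa using (hasDerivAt_id y).const_sub 1
  have q1 := p1.log hp.ne'
  have q2 := p2.log hm.ne'
  have d := ((p1.mul q1).add (p2.mul q2)).div_const (2*Real.log 2)
  rw [phi_eq]
  have := d.const_sub 1
  refine this.congr_deriv ?_
  unfold myat
  field_simp
  ring

section terms
variable {c x : ℝ}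

lemma hu_pos (hc1 : c ≤ 1) (hx0 : 0 < x) (hx1 : x < 1) : 0 < 1 - c*x^2 := by nlinarith

lemma hr_lt_one (hc0 : 0 < c) (hx0 : 0 < x) (hx1 : x < 1) : Real.sqrt (1-c*x^2) < 1 := by
  rw [Real.sqrt_lt' (by norm_num)]
  nlinarith [mul_pos hc0 (pow_pos hx0 2)]

lemma hL : Real.log 2 ≠ 0 := ne_of_gt (Real.log_pos (by norm_num))

lemma sqrt_hasDeriv (hc1 : c ≤ 1) (hx0 : 0 < x) (hx1 : x < 1) :
    HasDerivAt (fun x : ℝ => Real.sqrt (1-c*x^2)) (-(c*x)/Real.sqrt (1-c*x^2)) x := by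
  have hu := hu_pos hc1 hx0 hx1
  have hr0 : 0 < Real.sqrt (1-c*x^2) := Real.sqrt_pos.mpr hu
  have inner : HasDerivAt (fun x : ℝ => 1-c*x^2) (-(c*(2*x))) x := by
    simpa using ((hasDerivAt_pow 2 x).const_mul c).const_sub 1
  have := (Real.hasDerivAt_sqrt hu.ne').comp x inner
  refine (this.congr_deriv ?_)
  field_simp

lemma T1 (hc0 : 0 < c) (hc1 : c ≤ 1) (hx0 : 0 < x) (hx1 : x < 1) :
    HasDerivAt (fun x : ℝ => phi (Real.sqrt (1-c*x^2)))
      (c*x*myat (Real.sqrt (1-c*x^2))/Real.sqrt (1-c*x^2)/Real.log 2) x := by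
  have hu := hu_pos hc1 hx0 hx1
  have hr0 : 0 < Real.sqrt (1-c*x^2) := Real.sqrt_pos.mpr hu
  have hr1 := hr_lt_one hc0 hx0 hx1
  have hd := (hasDerivAt_phi (by linarith) hr1).comp x (sqrt_hasDeriv hc1 hx0 hx1)
  refine hd.congr_deriv ?_
  field_simp

lemma T2 (hc0 : 0 < c) (hc1 : c ≤ 1) (hx0 : 0 < x) (hx1 : x < 1) :
    HasDerivAt (fun x : ℝ => c*x*myat (Real.sqrt (1-c*x^2))/Real.sqrt (1-c*x^2)/Real.log 2)
      (c*(myat (Real.sqrt (1-c*x^2)) - Real.sqrt (1-c*x^2))/(Real.sqrt (1-c*x^2))^3/Real.log 2) x := by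
  have hu := hu_pos hc1 hx0 hx1
  have hr0 : 0 < Real.sqrt (1-c*x^2) := Real.sqrt_pos.mpr hu
  have hr1 := hr_lt_one hc0 hx0 hx1
  have hr2 : (Real.sqrt (1-c*x^2))^2 = 1-c*x^2 := Real.sq_sqrt hu.le
  have hsq := sqrt_hasDeriv hc1 hx0 hx1
  have hm : HasDerivAt (fun x : ℝ => myat (Real.sqrt (1-c*x^2)))
      (1/(1-(Real.sqrt (1-c*x^2))^2) * (-(c*x)/Real.sqrt (1-c*x^2))) x :=
    (hasDerivAt_myat (t := Real.sqrt (1-c*x^2)) (by linarith) hr1).comp (h := fun x : ℝ => Real.sqrt (1-c*x^2)) x hsq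
  have hN : HasDerivAt (fun x : ℝ => c*x*myat (Real.sqrt (1-c*x^2)))
      (c*1*myat (Real.sqrt (1-c*x^2)) + c*x*(1/(1-(Real.sqrt (1-c*x^2))^2) * (-(c*x)/Real.sqrt (1-c*x^2)))) x := by
    have := (((hasDerivAt_id x).const_mul c).mul hm)
    refine this.congr_deriv ?_
    simp only [id_eq]
  have hfull := (hN.div hsq hr0.ne').div_const (Real.log 2)
  refine hfull.congr_deriv ?_
  rw [show (1:ℝ)-(Real.sqrt (1-c*x^2))^2 = c*x^2 by rw [hr2]; ring]
  have hcx : c*x^2 ≠ 0 := by positivity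
  set r := Real.sqrt (1-c*x^2) with hr
  field_simp
  ring_nf
  linear_combination (myat r) * hr2

end terms

lemma key {c : ℝ} (hc0 : 0 < c) (hc1 : c ≤ 1) :
    ConcaveOn ℝ (Set.Icc 0 1)
      (fun x : ℝ => phi (Real.sqrt (1-c*x^2)) - phi (Real.sqrt (1-x^2))) := by
  have hLpos : (0:ℝ) < Real.log 2 := Real.log_pos (by norm_num)
  set g : ℝ → ℝ := fun x =>
    c*x*myat (Real.sqrt (1-c*x^2))/Real.sqrt (1-c*x^2)/Real.log 2
      - x*myat (Real.sqrt (1-x^2))/Real.sqrt (1-x^2)/Real.log 2 with hg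
  have hder : ∀ x ∈ Ioo (0:ℝ) 1,
      HasDerivAt (fun x : ℝ => phi (Real.sqrt (1-c*x^2)) - phi (Real.sqrt (1-x^2))) (g x) x := by
    intro x hx
    have h1 := T1 hc0 hc1 hx.1 hx.2
    have h2 := T1 one_pos le_rfl hx.1 hx.2
    simp only [one_mul] at h2
    exact h1.sub h2
  have hanti : AntitoneOn g (Ioo (0:ℝ) 1) := by
    apply antitoneOn_of_hasDerivWithinAt_nonpos (convex_Ioo 0 1)
      (f' := fun x => c*(myat (Real.sqrt (1-c*x^2)) - Real.sqrt (1-c*x^2))/(Real.sqrt (1-c*x^2))^3/Real.log 2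
        - (myat (Real.sqrt (1-x^2)) - Real.sqrt (1-x^2))/(Real.sqrt (1-x^2))^3/Real.log 2)
    · intro x hx
      have h1 := T2 hc0 hc1 hx.1 hx.2
      have h2 := T2 one_pos le_rfl hx.1 hx.2
      simp only [one_mul] at h2
      exact ((h1.sub h2).differentiableAt.continuousAt).continuousWithinAt
    · intro x hx
      rw [interior_Ioo] at hx
      have h1 := T2 hc0 hc1 hx.1 hx.2
      have h2 := T2 one_pos le_rfl hx.1 hx.2
      simp only [one_mul] at h2
      exact (h1.sub h2).hasDerivWithinAt
    · intro x hx
      rw [interior_Ioo] at hx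
      obtain ⟨hx0, hx1⟩ := hx
      have hu := hu_pos hc1 hx0 hx1
      have hu1 : (0:ℝ) < 1 - x^2 := by nlinarith
      set r := Real.sqrt (1-c*x^2) with hrdef
      set s := Real.sqrt (1-x^2) with hsdef
      have hr2 : r^2 = 1-c*x^2 := Real.sq_sqrt hu.le
      have hs2 : s^2 = 1-x^2 := Real.sq_sqrt hu1.le
      have hs0 : 0 < s := Real.sqrt_pos.mpr hu1
      have hr1 : r < 1 := hr_lt_one hc0 hx0 hx1
      have hsr : s ≤ r := Real.sqrt_le_sqrt (by nlinarith)
      have h1s2 : (0:ℝ) < 1 - s^2 := by rw [hs2]; nlinarith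
      have main : c*(myat r - r)/r^3 ≤ (myat s - s)/s^3 := by
        have hL3 := L3 hs0 hsr hr1
        have hc : c*(1-s^2) = 1-r^2 := by rw [hs2, hr2]; ring
        have lhs_eq : c*(myat r - r)/r^3 = ((1-r^2)*(myat r - r)/r^3)/(1-s^2) := by
          rw [← hc]; field_simp
        have rhs_eq : (myat s - s)/s^3 = ((1-s^2)*(myat s - s)/s^3)/(1-s^2) := by
          field_simp
        rw [lhs_eq, rhs_eq]
        exact div_le_div_of_nonneg_right hL3 h1s2.le |>.trans_eq rfl
      have := (div_le_div_iff_of_pos_right hLpos).mpr main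
      linarith [this]
  apply AntitoneOn.concaveOn_of_deriv (convex_Icc 0 1)
  · have c1 : Continuous (fun x : ℝ => phi (Real.sqrt (1-c*x^2))) :=
      continuous_phi.comp (Real.continuous_sqrt.comp (by continuity))
    have c2 : Continuous (fun x : ℝ => phi (Real.sqrt (1-x^2))) :=
      continuous_phi.comp (Real.continuous_sqrt.comp (by continuity))
    exact (c1.sub c2).continuousOn
  · rw [interior_Icc]
    exact fun x hx => ((hder x hx).differentiableAt).differentiableWithinAt
  · rw [interior_Icc]
    intro a ha b hb hab
    rw [(hder a ha).deriv, (hder b hb).deriv]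
    exact hanti ha hb hab

lemma key2 : ConcaveOn ℝ (Set.Icc 0 1) (fun x : ℝ => -phi (Real.sqrt (1-x^2))) := by
  have hLpos : (0:ℝ) < Real.log 2 := Real.log_pos (by norm_num)
  set g : ℝ → ℝ := fun x => -(x*myat (Real.sqrt (1-x^2))/Real.sqrt (1-x^2)/Real.log 2) with hg
  have hder : ∀ x ∈ Ioo (0:ℝ) 1,
      HasDerivAt (fun x : ℝ => -phi (Real.sqrt (1-x^2))) (g x) x := by
    intro x hx
    have h2 := T1 one_pos le_rfl hx.1 hx.2
    simp only [one_mul] at h2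
    exact h2.neg
  have hanti : AntitoneOn g (Ioo (0:ℝ) 1) := by
    apply antitoneOn_of_hasDerivWithinAt_nonpos (convex_Ioo 0 1)
      (f' := fun x => -((myat (Real.sqrt (1-x^2)) - Real.sqrt (1-x^2))/(Real.sqrt (1-x^2))^3/Real.log 2))
    · intro x hx
      have h2 := T2 one_pos le_rfl hx.1 hx.2
      simp only [one_mul] at h2
      exact (h2.neg.differentiableAt.continuousAt).continuousWithinAt
    · intro x hx
      rw [interior_Ioo] at hx
      have h2 := T2 one_pos le_rfl hx.1 hx.2
      simp only [one_mul] at h2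
      exact h2.neg.hasDerivWithinAt
    · intro x hx
      rw [interior_Ioo] at hx
      obtain ⟨hx0, hx1⟩ := hx
      have hu1 : (0:ℝ) < 1 - x^2 := by nlinarith
      set s := Real.sqrt (1-x^2) with hsdef
      have hs0 : 0 < s := Real.sqrt_pos.mpr hu1
      have hs1 : s < 1 := by
        rw [hsdef, Real.sqrt_lt' one_pos]
        nlinarith
      have hms : s ≤ myat s := le_myat hs0.le hs1
      have : 0 ≤ (myat s - s)/s^3/Real.log 2 :=
        div_nonneg (div_nonneg (by linarith) (pow_pos hs0 3).le) hLpos.le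
      linarith
  apply AntitoneOn.concaveOn_of_deriv (convex_Icc 0 1)
  · exact ((continuous_phi.comp (Real.continuous_sqrt.comp (by continuity))).neg).continuousOn
  · rw [interior_Icc]
    exact fun x hx => ((hder x hx).differentiableAt).differentiableWithinAt
  · rw [interior_Icc]
    intro a ha b hb hab
    rw [(hder a ha).deriv, (hder b hb).deriv]
    exact hanti ha hb hab

theorem stmt_4 (Q : ℝ) (hQ0 : 0 ≤ Q) (hQ1 : Q ≤ 1) :
    ConcaveOn ℝ (Set.Icc 0 1)
      (fun x : ℝ => 1 + phi (Real.sqrt (Q + (1 - Q) * (1 - x^2))) - phi (Real.sqrt (1 - x^2))) := by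
  rcases eq_or_lt_of_le hQ1 with hQ | hQ
  · have heq : (fun x : ℝ => 1 + phi (Real.sqrt (Q + (1 - Q) * (1 - x^2))) - phi (Real.sqrt (1 - x^2)))
        = fun x : ℝ => (-phi (Real.sqrt (1-x^2))) + 1 := by
      funext x
      have : Q + (1 - Q) * (1 - x^2) = 1 := by rw [← hQ]; ring
      rw [this, Real.sqrt_one, phi_one]
      ring
    rw [heq]
    exact key2.add_const 1
  · have hc0 : 0 < 1 - Q := by linarith
    have hc1 : 1 - Q ≤ 1 := by linarith
    have heq : (fun x : ℝ => 1 + phi (Real.sqrt (Q + (1 - Q) * (1 - x^2))) - phi (Real.sqrt (1 - x^2)))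
        = fun x : ℝ => (phi (Real.sqrt (1-(1-Q)*x^2)) - phi (Real.sqrt (1-x^2))) + 1 := by
      funext x
      have : Q + (1 - Q) * (1 - x^2) = 1 - (1-Q)*x^2 := by ring
      rw [this]
      ring
    rw [heq]
    exact (key hc0 hc1).add_const 1
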